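/- arXiv:0805.4299 — 4 statements merged into one kernel-verified Lean document; each statement's English description precedes it below -/
import Mathlib

section
/- Let x, y, t be real numbers with x > 0, y > 0 and t ≥ 0, and let n ∈ ℕ. Then ∑_{k=0}^{n} A_k(x,t) · A_{n-k}(y,t) = A_n(x+y, t). -/
open Polynomial Finset

/-- The generalized binomial coefficient `binom(z, n) = z(z-1)⋯(z-n+1)/n!` for real `z`. -/
noncomputable def genBinom (z : ℝ) (n : ℕ) : ℝ :=
  (descPochhammer ℝ n).eval z / (Nat.factorial n)

/-- `A_n(x,t) := (x/(x+nt)) · binom(x+nt, n)`, with `A_0(x,t) := 1`. -/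
noncomputable def rothe (n : ℕ) (x t : ℝ) : ℝ :=
  if n = 0 then 1 else x / (x + n * t) * genBinom (x + n * t) n


/-- Polynomial form of the Rothe function. -/
noncomputable def rotheP (n : ℕ) (t : ℝ) : Polynomial ℝ :=
  match n with
  | 0 => 1
  | m + 1 => Polynomial.C (((m+1).factorial : ℝ)⁻¹) *
      (Polynomial.X * (descPochhammer ℝ m).comp (Polynomial.X + Polynomial.C ((m+1 : ℕ) * t - 1)))

noncomputable def P (n : ℕ) (x t : ℝ) : ℝ := (rotheP n t).eval x

lemma P_zero (x t : ℝ) : P 0 x t = 1 := by simp [P, rotheP]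

lemma P_succ (m : ℕ) (x t : ℝ) :
    P (m+1) x t = x * (descPochhammer ℝ m).eval (x + (m+1 : ℕ) * t - 1) / (m+1).factorial := by
  simp [P, rotheP, eval_comp]
  ring

lemma P_succ_zero (m : ℕ) (t : ℝ) : P (m+1) 0 t = 0 := by
  simp [P_succ]

/-- Pascal-type recurrence. -/
lemma P_rec (n : ℕ) (x t : ℝ) :
    P (n+1) x t = P (n+1) (x-1) t + P n (x+t-1) t := by
  cases n with
  | zero => simp [P_succ, P_zero]
  | succ m =>
    have h1 : ∀ w : ℝ, (descPochhammer ℝ (m+1)).eval w = w * (descPochhammer ℝ m).eval (w - 1) := by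
      intro w
      rw [descPochhammer_succ_left]
      simp [eval_comp]
    have h2 : ∀ w : ℝ, (descPochhammer ℝ (m+1)).eval w = (descPochhammer ℝ m).eval w * (w - m) :=
      fun w => descPochhammer_succ_eval m w
    rw [P_succ, P_succ, P_succ]
    rw [h1 (x + (m+1+1 : ℕ) * t - 1), h2 (x - 1 + (m+1+1 : ℕ) * t - 1)]
    have he : x + (m+1+1 : ℕ) * t - 1 - 1 = x - 1 + (m+1+1 : ℕ) * t - 1 := by ring
    have he2 : x + t - 1 + (m+1 : ℕ) * t - 1 = x - 1 + (m+1+1 : ℕ) * t - 1 := by push_cast; ring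
    rw [he, he2]
    set d := (descPochhammer ℝ m).eval (x - 1 + (m+1+1 : ℕ) * t - 1) with hd
    have hf1 : ((m+1+1).factorial : ℝ) = (m+2) * (m+1).factorial := by
      rw [Nat.factorial_succ]; push_cast; ring
    have hf0 : ((m+1).factorial : ℝ) ≠ 0 := Nat.cast_ne_zero.mpr (Nat.factorial_ne_zero _)
    rw [hf1]
    field_simp
    push_cast; ring

lemma P_conv : ∀ (n : ℕ) (x y t : ℝ),
    ∑ k ∈ Finset.range (n + 1), P k x t * P (n - k) y t = P n (x+y) t := by
  intro n
  induction n with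
  | zero => intro x y t; simp [P_zero]
  | succ n IH =>
    intro x y t
    set D : Polynomial ℝ :=
      (∑ k ∈ Finset.range (n + 2), rotheP k t * Polynomial.C (P (n + 1 - k) y t)) -
        (rotheP (n+1) t).comp (Polynomial.X + Polynomial.C y) with hD
    have hevalD : ∀ z : ℝ, D.eval z =
        (∑ k ∈ Finset.range (n + 2), P k z t * P (n + 1 - k) y t) - P (n+1) (z+y) t := by
      intro z
      simp [hD, eval_finset_sum, eval_comp, P]
    have hper : ∀ z : ℝ, D.eval z = D.eval (z - 1) := by
      intro z
      rw [hevalD, hevalD]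
      have hsum : (∑ k ∈ Finset.range (n + 2), P k z t * P (n + 1 - k) y t) -
          (∑ k ∈ Finset.range (n + 2), P k (z-1) t * P (n + 1 - k) y t)
          = ∑ j ∈ Finset.range (n + 1), P j (z+t-1) t * P (n - j) y t := by
        rw [← Finset.sum_sub_distrib]
        rw [Finset.sum_range_succ' (fun k => P k z t * P (n + 1 - k) y t - P k (z-1) t * P (n + 1 - k) y t) (n+1)]
        simp only [P_zero, one_mul, sub_self, add_zero]
        apply Finset.sum_congr rfl
        intro j hj
        rw [← sub_mul]
        congr 1
        · have := P_rec j z t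
          linarith [this]
        · congr 1
          omega
      have h2 : ∑ j ∈ Finset.range (n + 1), P j (z+t-1) t * P (n - j) y t = P n (z+t-1+y) t :=
        IH (z+t-1) y t
      have h3 : P (n+1) (z+y) t = P (n+1) (z+y-1) t + P n (z+y+t-1) t := P_rec n (z+y) t
      have he : z - 1 + y = z + y - 1 := by ring
      have he2 : z + t - 1 + y = z + y + t - 1 := by ring
      rw [he2] at h2
      rw [he]
      linarith [hsum, h2, h3]
    have h0 : D.eval 0 = 0 := by
      rw [hevalD]
      rw [Finset.sum_range_succ' (fun k => P k (0:ℝ) t * P (n + 1 - k) y t) (n+1)]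
      simp only [P_succ_zero, zero_mul, Finset.sum_const_zero, zero_add, P_zero, one_mul]
      norm_num
    have hnat : ∀ k : ℕ, D.eval (k : ℝ) = 0 := by
      intro k
      induction k with
      | zero => simpa using h0
      | succ k ih =>
        have := hper ((k:ℝ)+1)
        simp only [add_sub_cancel_right] at this
        push_cast
        rw [this, ih]
    have hDzero : D = 0 := by
      apply Polynomial.eq_zero_of_infinite_isRoot
      apply Set.Infinite.mono (s := Set.range (fun k : ℕ => (k : ℝ)))
      · rintro _ ⟨k, rfl⟩; exact hnat k
      · exact Set.infinite_range_of_injective (fun a b h => Nat.cast_injective h)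
    have := hevalD x
    rw [hDzero] at this
    simp at this
    linarith [this]

lemma rothe_eq_P (n : ℕ) (x t : ℝ) (h : x + n * t ≠ 0) : rothe n x t = P n x t := by
  cases n with
  | zero => simp [rothe, P_zero]
  | succ m =>
    rw [rothe, P_succ]
    simp only [Nat.succ_ne_zero, if_false, genBinom]
    rw [show (descPochhammer ℝ (m+1)).eval (x + (m+1 : ℕ) * t)
        = (x + (m+1 : ℕ) * t) * (descPochhammer ℝ m).eval (x + (m+1 : ℕ) * t - 1) by
      rw [descPochhammer_succ_left]; simp [eval_comp]]
    push_cast at h ⊢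
    field_simp

/-- For `x, y > 0`, `t ≥ 0` and `n ∈ ℕ`,
`∑_{k=0}^{n} A_k(x,t) · A_{n-k}(y,t) = A_n(x+y, t)`. -/
theorem rothe_convolution (x y t : ℝ) (hx : 0 < x) (hy : 0 < y) (ht : 0 ≤ t) (n : ℕ) :
    ∑ k ∈ Finset.range (n + 1), rothe k x t * rothe (n - k) y t = rothe n (x + y) t := by
  have hx' : ∀ k : ℕ, x + k * t ≠ 0 := fun k =>
    ne_of_gt (by positivity)
  have hy' : ∀ k : ℕ, y + k * t ≠ 0 := fun k => ne_of_gt (by positivity)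
  have hxy' : x + y + n * t ≠ 0 := ne_of_gt (by positivity)
  rw [rothe_eq_P n (x+y) t hxy']
  rw [← P_conv n x y t]
  apply Finset.sum_congr rfl
  intro k _
  rw [rothe_eq_P k x t (hx' k), rothe_eq_P (n-k) y t (hy' (n-k))]
end

section
/- Let r ≥ 1 and n ∈ ℕ, let t ≥ 0 be real, and let x₁, …, x_r be positive real numbers. Then ∑_{n₁+⋯+n_r = n} A_{n₁}(x₁,t) ⋯ A_{n_r}(x_r,t) = A_n(x₁ + ⋯ + x_r, t), where the sum runs over all r-tuples (n₁,…,n_r) of nonnegative integers with n₁+⋯+n_r = n. -/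
open Polynomial Finset

/-- The Gould polynomial (times `n!`): `q_n(x) = x (x+nt-1) ⋯ (x+nt-n+1)`. -/
noncomputable def gouldP (t : ℝ) : ℕ → Polynomial ℝ
  | 0 => 1
  | (n+1) => X * ∏ j ∈ Finset.range n, (X + C (((n : ℝ)+1)*t - ((j : ℝ)+1)))

lemma gouldP_zero (t : ℝ) : gouldP t 0 = 1 := rfl

lemma eval_gouldP (t x : ℝ) (n : ℕ) :
    (gouldP t (n+1)).eval x = x * ∏ j ∈ Finset.range n, (x + ((n : ℝ)+1)*t - ((j : ℝ)+1)) := by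
  simp only [gouldP, eval_mul, eval_X, eval_prod, eval_add, eval_C]
  congr 1
  exact Finset.prod_congr rfl fun j _ => by ring

lemma gouldP_eval_zero (t : ℝ) (n : ℕ) : (gouldP t (n+1)).eval 0 = 0 := by
  simp [eval_gouldP]

/-- Delta-operator recurrence: `q_{n+1}(x+1-t) - q_{n+1}(x-t) = (n+1) q_n(x)`. -/
lemma gouldP_rec (t x : ℝ) (n : ℕ) :
    (gouldP t (n+1)).eval (x + (1 - t)) - (gouldP t (n+1)).eval (x + (-t))
      = ((n : ℝ)+1) * (gouldP t n).eval x := by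
  cases n with
  | zero => simp [eval_gouldP, gouldP_zero]
  | succ m =>
    rw [eval_gouldP, eval_gouldP, eval_gouldP]
    push_cast
    set P := ∏ j ∈ Finset.range m, (x + ((m:ℝ)+1)*t - ((j:ℝ)+1)) with hP
    have hA : (∏ j ∈ Finset.range (m+1), (x + (1-t) + (((m:ℝ)+1)+1)*t - ((j:ℝ)+1)))
        = P * (x + ((m:ℝ)+1)*t) := by
      rw [Finset.prod_range_succ']
      congr 1
      · exact Finset.prod_congr rfl fun j _ => by push_cast; ring
      · norm_num; ring
    have hB : (∏ j ∈ Finset.range (m+1), (x + (-t) + (((m:ℝ)+1)+1)*t - ((j:ℝ)+1)))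
        = P * (x + ((m:ℝ)+1)*t - ((m:ℝ)+1)) := by
      rw [Finset.prod_range_succ]
      congr 1
      · exact Finset.prod_congr rfl fun j _ => by ring
      · ring
    rw [hA, hB]
    ring

/-- Gould polynomials are of binomial type. -/
lemma gouldP_binomial (t : ℝ) : ∀ (n : ℕ) (x y : ℝ),
    (gouldP t n).eval (x + y)
      = ∑ k ∈ Finset.range (n+1),
          (n.choose k : ℝ) * (gouldP t k).eval x * (gouldP t (n-k)).eval y := by
  intro n
  induction n with
  | zero => intro x y; simp [gouldP_zero]
  | succ n ih =>
    intro x y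
    set F : Polynomial ℝ := (gouldP t (n+1)).comp (X + C y)
      - ∑ k ∈ Finset.range (n+2),
          C (((n+1).choose k : ℝ) * (gouldP t (n+1-k)).eval y) * gouldP t k with hF
    have hFeval : ∀ z : ℝ, F.eval z = (gouldP t (n+1)).eval (z + y)
        - ∑ k ∈ Finset.range (n+2),
            ((n+1).choose k : ℝ) * (gouldP t (n+1-k)).eval y * (gouldP t k).eval z := by
      intro z
      simp [hF, eval_finset_sum, mul_assoc]
    have hshift : ∀ z : ℝ, F.eval (z + (1-t)) - F.eval (z + (-t)) = 0 := by
      intro z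
      rw [hFeval, hFeval]
      have h1 : (gouldP t (n+1)).eval (z + (1-t) + y) - (gouldP t (n+1)).eval (z + (-t) + y)
          = ((n:ℝ)+1) * (gouldP t n).eval (z+y) := by
        rw [show z + (1-t) + y = (z+y)+(1-t) by ring, show z + (-t) + y = (z+y)+(-t) by ring]
        exact gouldP_rec t (z+y) n
      have h2 : (∑ k ∈ Finset.range (n+2),
            ((n+1).choose k : ℝ) * (gouldP t (n+1-k)).eval y * (gouldP t k).eval (z+(1-t)))
          - (∑ k ∈ Finset.range (n+2),
            ((n+1).choose k : ℝ) * (gouldP t (n+1-k)).eval y * (gouldP t k).eval (z+(-t)))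
          = ((n:ℝ)+1) * ∑ j ∈ Finset.range (n+1),
              (n.choose j : ℝ) * (gouldP t j).eval z * (gouldP t (n-j)).eval y := by
        rw [← Finset.sum_sub_distrib, Finset.sum_range_succ', Finset.mul_sum]
        simp only [gouldP_zero, eval_one, Nat.succ_sub_succ]
        rw [show (((n+1).choose 0 : ℝ) * (gouldP t (n+1-0)).eval y * 1
            - ((n+1).choose 0 : ℝ) * (gouldP t (n+1-0)).eval y * 1) = 0 by ring, add_zero]
        refine Finset.sum_congr rfl fun j hj => ?_
        have hrec := gouldP_rec t z j
        have hch : ((n+1).choose (j+1) : ℝ) * ((j:ℝ)+1) = ((n:ℝ)+1) * (n.choose j : ℝ) := by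
          have h := (Nat.add_one_mul_choose_eq n j).symm
          exact_mod_cast h
        linear_combination ((n+1).choose (j+1) : ℝ) * (gouldP t (n-j)).eval y * hrec
          + (gouldP t j).eval z * (gouldP t (n-j)).eval y * hch
      linear_combination h1 - h2 + ((n:ℝ)+1) * (ih z y)
    have hper : ∀ z : ℝ, F.eval (z+1) = F.eval z := by
      intro z
      have h := hshift (z + t)
      rw [show z + t + (1-t) = z + 1 by ring, show z + t + (-t) = z by ring] at h
      linarith
    have hnat : ∀ m : ℕ, F.eval (m : ℝ) = F.eval 0 := by
      intro m
      induction m with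
      | zero => norm_num
      | succ k ihk => push_cast; rw [hper k]; exact_mod_cast ihk
    have hF0 : F.eval 0 = 0 := by
      rw [hFeval, Finset.sum_range_succ']
      simp [gouldP_eval_zero, gouldP_zero]
    have hFzero : F = 0 := by
      apply Polynomial.eq_zero_of_infinite_isRoot
      apply Set.Infinite.mono (s := Set.range ((↑· : ℕ → ℝ)))
      · rintro _ ⟨m, rfl⟩
        show F.eval _ = 0
        rw [hnat m, hF0]
      · exact Set.infinite_range_of_injective Nat.cast_injective
    have hx := hFeval x
    rw [hFzero] at hx
    simp only [eval_zero] at hx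
    have hs : ∑ k ∈ Finset.range (n+1+1),
        ((n+1).choose k : ℝ) * (gouldP t k).eval x * (gouldP t (n+1-k)).eval y
        = ∑ k ∈ Finset.range (n+2),
        ((n+1).choose k : ℝ) * (gouldP t (n+1-k)).eval y * (gouldP t k).eval x :=
      Finset.sum_congr rfl fun k _ => by ring
    rw [hs]
    linarith

lemma descPochhammer_eval_prod (z : ℝ) (n : ℕ) :
    (descPochhammer ℝ n).eval z = ∏ j ∈ Finset.range n, (z - j) := by
  induction n with
  | zero => simp
  | succ m ih => rw [descPochhammer_succ_eval, ih, Finset.prod_range_succ]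

lemma rothe_eq_gouldP (n : ℕ) (x t : ℝ) (hx : 0 < x) (ht : 0 ≤ t) :
    rothe n x t = (gouldP t n).eval x / n.factorial := by
  cases n with
  | zero => simp [rothe, gouldP_zero]
  | succ m =>
    have hpos : 0 < x + ((m:ℝ)+1) * t := by positivity
    have hcast : ((m+1 : ℕ) : ℝ) = (m:ℝ)+1 := by push_cast; ring
    rw [rothe, if_neg (Nat.succ_ne_zero m), genBinom, descPochhammer_eval_prod,
      Finset.prod_range_succ', eval_gouldP]
    have hprod : ∀ j ∈ Finset.range m,
        (x + ((m+1:ℕ):ℝ) * t - ((j+1 : ℕ):ℝ)) = (x + ((m:ℝ)+1)*t - ((j:ℝ)+1)) := by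
      intro j _; push_cast; ring
    rw [Finset.prod_congr rfl hprod, hcast]
    have hne : x + ((m:ℝ)+1)*t ≠ 0 := ne_of_gt hpos
    field_simp
    ring

/-- The two-variable Rothe convolution identity. -/
lemma rothe_conv (n : ℕ) (t : ℝ) (ht : 0 ≤ t) (x y : ℝ) (hx : 0 < x) (hy : 0 < y) :
    ∑ k ∈ Finset.range (n+1), rothe k x t * rothe (n-k) y t = rothe n (x+y) t := by
  rw [rothe_eq_gouldP n (x+y) t (by positivity) ht, gouldP_binomial, Finset.sum_div]
  refine Finset.sum_congr rfl fun k hk => ?_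
  rw [rothe_eq_gouldP k x t hx ht, rothe_eq_gouldP (n-k) y t hy ht]
  have hk' : k ≤ n := Nat.lt_succ_iff.mp (Finset.mem_range.mp hk)
  have hfac : (n.choose k : ℝ) * k.factorial * (n-k).factorial = n.factorial := by
    exact_mod_cast Nat.choose_mul_factorial_mul_factorial hk'
  have f1 : (k.factorial : ℝ) ≠ 0 := by positivity
  have f2 : ((n-k).factorial : ℝ) ≠ 0 := by positivity
  have f3 : (n.factorial : ℝ) ≠ 0 := by positivity
  field_simp
  linear_combination (-((gouldP t k).eval x * (gouldP t (n-k)).eval y)) * hfac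

lemma sum_antidiagonalTuple_succ {M : Type*} [AddCommMonoid M] (r n : ℕ)
    (F : (Fin (r+1) → ℕ) → M) :
    ∑ f ∈ Finset.Nat.antidiagonalTuple (r+1) n, F f
      = ∑ p ∈ Finset.HasAntidiagonal.antidiagonal n,
          ∑ g ∈ Finset.Nat.antidiagonalTuple r p.2, F (Fin.cons p.1 g) := by
  rw [Finset.sum_sigma']
  refine Finset.sum_nbij' (i := fun f => ⟨(f 0, ∑ i : Fin r, f i.succ), Fin.tail f⟩)
    (j := fun s => Fin.cons s.1.1 s.2) ?_ ?_ ?_ ?_ ?_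
  · intro f hf
    rw [Finset.Nat.mem_antidiagonalTuple] at hf
    rw [Finset.mem_sigma]
    constructor
    · rw [Finset.HasAntidiagonal.mem_antidiagonal]
      rw [← hf, Fin.sum_univ_succ]
    · rw [Finset.Nat.mem_antidiagonalTuple]
      rfl
  · intro s hs
    rw [Finset.mem_sigma, Finset.HasAntidiagonal.mem_antidiagonal, Finset.Nat.mem_antidiagonalTuple] at hs
    rw [Finset.Nat.mem_antidiagonalTuple, Fin.sum_univ_succ]
    simp only [Fin.cons_zero, Fin.cons_succ]
    rw [hs.2, hs.1]
  · intro f _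
    exact Fin.cons_self_tail f
  · intro s hs
    rw [Finset.mem_sigma, Finset.HasAntidiagonal.mem_antidiagonal, Finset.Nat.mem_antidiagonalTuple] at hs
    obtain ⟨⟨a, b⟩, g⟩ := s
    simp only [Fin.cons_zero, Fin.tail_cons]
    congr 1
    simp only [Prod.mk.injEq, true_and]
    simpa using hs.2
  · intro f _
    simp [Fin.cons_self_tail]

/-- For `r ≥ 1`, `n ∈ ℕ`, `t ≥ 0` and positive reals `x₁, …, x_r`,
`∑_{n₁+⋯+n_r = n} A_{n₁}(x₁,t) ⋯ A_{n_r}(x_r,t) = A_n(x₁+⋯+x_r, t)`,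
the sum running over all `r`-tuples of nonnegative integers summing to `n`. -/
theorem rothe_multi_convolution (r : ℕ) (hr : 1 ≤ r) (n : ℕ) (t : ℝ) (ht : 0 ≤ t)
    (x : Fin r → ℝ) (hx : ∀ i, 0 < x i) :
    ∑ f ∈ Finset.Nat.antidiagonalTuple r n, ∏ i, rothe (f i) (x i) t
      = rothe n (∑ i, x i) t := by
  obtain ⟨s, rfl⟩ : ∃ s, r = s + 1 := ⟨r - 1, by omega⟩
  clear hr
  induction s generalizing n with
  | zero =>
    simp [Finset.Nat.antidiagonalTuple_one]
  | succ m ih =>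
    rw [sum_antidiagonalTuple_succ]
    have hx0 : 0 < x 0 := hx 0
    have hxs : 0 < ∑ i : Fin (m+1), x i.succ :=
      Finset.sum_pos (fun i _ => hx i.succ) Finset.univ_nonempty
    have hinner : ∀ p ∈ Finset.HasAntidiagonal.antidiagonal n,
        (∑ g ∈ Finset.Nat.antidiagonalTuple (m+1) p.2,
          ∏ i, rothe ((Fin.cons p.1 g : Fin (m+2) → ℕ) i) (x i) t)
        = rothe p.1 (x 0) t * rothe p.2 (∑ i : Fin (m+1), x i.succ) t := by
      intro p _
      have hsplit : ∀ g : Fin (m+1) → ℕ,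
          (∏ i, rothe ((Fin.cons p.1 g : Fin (m+2) → ℕ) i) (x i) t)
          = rothe p.1 (x 0) t * ∏ i : Fin (m+1), rothe (g i) (x i.succ) t := by
        intro g
        rw [Fin.prod_univ_succ]
        simp [Fin.cons_zero, Fin.cons_succ]
      rw [Finset.sum_congr rfl fun g _ => hsplit g, ← Finset.mul_sum,
        ih p.2 (fun i => x i.succ) (fun i => hx i.succ)]
    rw [Finset.sum_congr rfl hinner, Finset.Nat.sum_antidiagonal_eq_sum_range_succ_mk,
      show (∑ i : Fin (m+1+1), x i) = x 0 + ∑ i : Fin (m+1), x i.succ from Fin.sum_univ_succ x]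
    simpa using rothe_conv n t ht (x 0) (∑ i : Fin (m+1), x i.succ) hx0 hxs
end

section
/- Let p ≥ 1 be an integer and define c(p,·,·) by the recursion in the context. Then for all integers k ≥ 0 and 0 ≤ l ≤ k, c(p,k,l) ≤ 2^k · binom(k,l) · (p+k−l)^l · (p+k−1)(p+k−2)⋯(p+1)p, where the last factor is the product ∏_{j=0}^{k−1}(p+j) (equal to 1 when k = 0). -/
/-- The number `c(p,k,l)` of elementary terms with `l` loops in the `k`-fold commutator
expansion of a `p`-particle observable, defined by the recursion
`c(p,0,0) = 1`, `c(p,k,l) = 0` for `l < 0` or `l > k`, and for `k ≥ 1`, `0 ≤ l ≤ k`: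
`c(p,k,l) = 2(p+k−l−1)·c(p,k−1,l) + (p+k−l)(p+k−l−1)·c(p,k−1,l−1)`. -/
noncomputable def loopCount (p : ℕ) : ℕ → ℤ → ℝ
  | 0, l => if l = 0 then 1 else 0
  | k + 1, l =>
      if 0 ≤ l ∧ l ≤ (k : ℤ) + 1 then
        2 * ((p : ℝ) + ((k : ℝ) + 1) - (l : ℝ) - 1) * loopCount p k l
          + ((p : ℝ) + ((k : ℝ) + 1) - (l : ℝ)) * ((p : ℝ) + ((k : ℝ) + 1) - (l : ℝ) - 1)
            * loopCount p k (l - 1)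
      else 0

lemma loopCount_neg (p : ℕ) : ∀ (k : ℕ) (l : ℤ), l < 0 → loopCount p k l = 0 := by
  intro k l hl
  cases k with
  | zero => rw [loopCount, if_neg (by omega)]
  | succ k => rw [loopCount, if_neg (by omega)]

lemma loopCount_nonneg (p : ℕ) (hp : 1 ≤ p) : ∀ (k : ℕ) (l : ℤ), 0 ≤ loopCount p k l := by
  intro k
  induction k with
  | zero => intro l; rw [loopCount]; split <;> norm_num
  | succ k ih =>
    intro l
    rw [loopCount]
    split
    · rename_i h
      have hl : (l : ℝ) ≤ (k : ℝ) + 1 := by exact_mod_cast h.2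
      have hp' : (1 : ℝ) ≤ p := by exact_mod_cast hp
      have hA : 0 ≤ (p : ℝ) + ((k : ℝ) + 1) - (l : ℝ) - 1 := by linarith
      have hB : 0 ≤ (p : ℝ) + ((k : ℝ) + 1) - (l : ℝ) := by linarith
      exact add_nonneg (mul_nonneg (by linarith) (ih l))
        (mul_nonneg (mul_nonneg hB hA) (ih (l - 1)))
    · exact le_refl 0

lemma step_ineq (a b c P X Y C0 C1 : ℝ) (m k : ℕ) (ha : 0 ≤ a) (hab : a ≤ b)
    (hbc : b ≤ c) (hP : 0 ≤ P) (hC0 : 0 ≤ C0) (hC1 : 0 ≤ C1)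
    (hX : X ≤ 2 ^ k * C1 * a ^ (m + 1) * P) (hY : Y ≤ 2 ^ k * C0 * b ^ m * P) :
    2 * a * X + b * a * Y ≤ 2 ^ (k + 1) * (C0 + C1) * b ^ (m + 1) * (P * c) := by
  have hb : 0 ≤ b := ha.trans hab
  have hc : 0 ≤ c := hb.trans hbc
  have hac : a ≤ c := hab.trans hbc
  have hpow : a ^ (m + 1) ≤ b ^ (m + 1) := pow_le_pow_left₀ ha hab _
  calc 2 * a * X + b * a * Y
      ≤ 2 * a * (2 ^ k * C1 * a ^ (m + 1) * P) + b * a * (2 ^ k * C0 * b ^ m * P) := by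
        have h1 := mul_le_mul_of_nonneg_left hX (by positivity : (0:ℝ) ≤ 2 * a)
        have h2 := mul_le_mul_of_nonneg_left hY (by positivity : (0:ℝ) ≤ b * a)
        linarith
    _ = (2 * 2 ^ k) * C1 * (a ^ (m + 1) * a) * P + 2 ^ k * C0 * (b ^ m * b) * (P * a) := by
        ring
    _ ≤ (2 * 2 ^ k) * C1 * (b ^ (m + 1) * c) * P + 2 ^ k * C0 * (b ^ m * b) * (P * c) := by
        gcongr
    _ ≤ (2 * 2 ^ k) * C1 * (b ^ (m + 1) * c) * P + (2 * 2 ^ k) * C0 * (b ^ m * b) * (P * c) := by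
        have : (2:ℝ) ^ k ≤ 2 * 2 ^ k := by nlinarith [pow_pos (by norm_num : (0:ℝ) < 2) k]
        gcongr
    _ = 2 ^ (k + 1) * (C0 + C1) * b ^ (m + 1) * (P * c) := by rw [pow_succ]; ring

lemma loopCount_le' (p : ℕ) (hp : 1 ≤ p) : ∀ (k l : ℕ),
    loopCount p k (l : ℤ) ≤
      2 ^ k * (Nat.choose k l : ℝ) * ((p : ℝ) + (k : ℝ) - (l : ℝ)) ^ l
        * ∏ j ∈ Finset.range k, ((p : ℝ) + (j : ℝ)) := by
  intro k
  induction k with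
  | zero =>
    intro l
    rw [loopCount]
    cases l with
    | zero => simp
    | succ m => rw [if_neg (by omega)]; simp
  | succ k ih =>
    intro l
    have hp' : (1 : ℝ) ≤ p := by exact_mod_cast hp
    have hP : 0 ≤ ∏ j ∈ Finset.range k, ((p : ℝ) + (j : ℝ)) := by
      apply Finset.prod_nonneg; intro j _; positivity
    by_cases hlk : l ≤ k + 1
    swap
    · -- l > k+1 : both sides vanish
      rw [loopCount, if_neg (by omega), Nat.choose_eq_zero_of_lt (by omega)]
      simp
    cases l with
    | zero =>
      rw [loopCount, if_pos (by constructor <;> omega)]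
      simp only [Nat.cast_zero, Nat.choose_zero_right, Nat.cast_one, zero_sub]
      rw [loopCount_neg p k (-1) (by omega)]
      have h0 := ih 0
      simp only [Nat.cast_zero, Nat.choose_zero_right, Nat.cast_one] at h0
      rw [Finset.prod_range_succ]
      have hc : (0:ℝ) ≤ (p : ℝ) + (k : ℝ) := by linarith
      push_cast
      rw [pow_succ]
      nlinarith [mul_le_mul_of_nonneg_left h0 (by linarith : (0:ℝ) ≤ 2*((p:ℝ)+(k:ℝ))), hP]
    | succ m =>
      have hm : m ≤ k := by omega
      rw [loopCount, if_pos (by constructor <;> [omega; exact_mod_cast (by omega : ((m:ℤ)+1) ≤ (k:ℤ)+1)])]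
      have X := ih (m + 1)
      have Y := ih m
      have hmr : (m : ℝ) ≤ (k : ℝ) := by exact_mod_cast hm
      push_cast at X Y ⊢
      rw [show ((m:ℤ) + 1 - 1) = (m : ℤ) from by ring]
      rw [Finset.prod_range_succ, Nat.choose_succ_succ]
      have key := step_ineq ((p:ℝ) + (k:ℝ) - ((m:ℝ) + 1)) ((p:ℝ) + (k:ℝ) - (m:ℝ))
        ((p:ℝ) + (k:ℝ)) (∏ j ∈ Finset.range k, ((p : ℝ) + (j : ℝ)))
        (loopCount p k ((m:ℤ) + 1)) (loopCount p k (m:ℤ))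
        ((k.choose m : ℝ)) ((k.choose (m+1) : ℝ)) m k
        (by linarith) (by linarith) (by linarith) hP
        (by positivity) (by positivity) X Y
      refine le_trans (le_of_eq (by ring)) (le_trans key (le_of_eq ?_))
      push_cast
      ring

/-- For `p ≥ 1` and all `0 ≤ l ≤ k`,
`c(p,k,l) ≤ 2^k · binom(k,l) · (p+k−l)^l · (p+k−1)(p+k−2)⋯(p+1)p`. -/
theorem loopCount_le (p : ℕ) (hp : 1 ≤ p) (k l : ℕ) (hlk : l ≤ k) :
    loopCount p k l ≤
      2 ^ k * (Nat.choose k l : ℝ) * ((p : ℝ) + (k : ℝ) - (l : ℝ)) ^ l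
        * ∏ j ∈ Finset.range k, ((p : ℝ) + (j : ℝ)) := by
  exact loopCount_le' p hp k l
end

section
/- Let p, L ∈ ℕ and let x be a real number with 0 ≤ x < 1. Then the series ∑_{k=0}^{∞} (p+k)^L x^k converges and ∑_{k=0}^{∞} (p+k)^L x^k ≤ e^p · L! / (1−x)^{L+1}. -/
private lemma keyA (k : ℕ) : ∀ L j : ℕ, j ≤ L →
    Nat.descFactorial L j * k ^ (L - j) ≤ Nat.ascFactorial (k + 1) L := by
  intro L
  induction L with
  | zero => intro j hj; interval_cases j; simp
  | succ L ih =>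
    intro j hj
    cases j with
    | zero =>
      simpa using
        calc Nat.descFactorial (L+1) 0 * k ^ (L + 1 - 0) = k * (1 * k ^ (L - 0)) := by
              simp [pow_succ, mul_comm]
          _ ≤ (k + 1 + L) * Nat.ascFactorial (k+1) L := by
              exact Nat.mul_le_mul (by omega) (by simpa using ih 0 (Nat.zero_le L))
          _ = Nat.ascFactorial (k+1) (L+1) := (Nat.ascFactorial_succ).symm
    | succ j =>
      have hj' : j ≤ L := Nat.succ_le_succ_iff.mp hj
      calc Nat.descFactorial (L+1) (j+1) * k ^ (L + 1 - (j+1))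
          = (L+1) * (Nat.descFactorial L j * k ^ (L - j)) := by
            rw [Nat.succ_descFactorial_succ, show L + 1 - (j+1) = L - j by omega]; ring
        _ ≤ (k + 1 + L) * Nat.ascFactorial (k+1) L :=
            Nat.mul_le_mul (by omega) (ih j hj')
        _ = Nat.ascFactorial (k+1) (L+1) := (Nat.ascFactorial_succ).symm

private lemma keyB (p L k : ℕ) :
    ((p : ℝ) + (k : ℝ)) ^ L ≤ Real.exp p * (Nat.factorial L : ℝ) * ((k + L).choose L : ℝ) := by
  have hA : (Nat.factorial L : ℝ) * ((k + L).choose L : ℝ)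
      = (Nat.ascFactorial (k+1) L : ℝ) := by
    rw [Nat.ascFactorial_eq_factorial_mul_choose]
    push_cast; ring
  rw [add_pow]
  have hterm : ∀ j ∈ Finset.range (L + 1),
      (p : ℝ) ^ j * (k : ℝ) ^ (L - j) * ((L.choose j : ℝ))
        ≤ ((p : ℝ) ^ j / (Nat.factorial j : ℝ)) * (Nat.ascFactorial (k+1) L : ℝ) := by
    intro j hj
    have hjL : j ≤ L := by simpa [Nat.lt_succ_iff] using Finset.mem_range.mp hj
    have h1 : (Nat.descFactorial L j : ℝ) * (k : ℝ) ^ (L - j)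
        ≤ (Nat.ascFactorial (k+1) L : ℝ) := by
      have := keyA k L j hjL
      push_cast at this ⊢
      exact_mod_cast this
    have h2 : (L.choose j : ℝ) * (Nat.factorial j : ℝ) = (Nat.descFactorial L j : ℝ) := by
      rw [Nat.descFactorial_eq_factorial_mul_choose]; push_cast; ring
    have hfj : (0:ℝ) < (Nat.factorial j : ℝ) := by exact_mod_cast j.factorial_pos
    rw [div_mul_eq_mul_div, le_div_iff₀ hfj]
    calc (p : ℝ) ^ j * (k : ℝ) ^ (L - j) * (L.choose j : ℝ) * (Nat.factorial j : ℝ)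
        = (p : ℝ) ^ j * ((Nat.descFactorial L j : ℝ) * (k : ℝ) ^ (L - j)) := by
          rw [← h2]; ring
      _ ≤ (p : ℝ) ^ j * (Nat.ascFactorial (k+1) L : ℝ) := by
          apply mul_le_mul_of_nonneg_left h1 (by positivity)
  calc ∑ j ∈ Finset.range (L + 1), (p : ℝ) ^ j * (k : ℝ) ^ (L - j) * ((L.choose j : ℝ))
      ≤ ∑ j ∈ Finset.range (L + 1),
          ((p : ℝ) ^ j / (Nat.factorial j : ℝ)) * (Nat.ascFactorial (k+1) L : ℝ) :=
        Finset.sum_le_sum hterm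
    _ = (∑ j ∈ Finset.range (L + 1), (p : ℝ) ^ j / (Nat.factorial j : ℝ))
          * (Nat.ascFactorial (k+1) L : ℝ) := by rw [Finset.sum_mul]
    _ ≤ Real.exp p * (Nat.ascFactorial (k+1) L : ℝ) := by
        apply mul_le_mul_of_nonneg_right
          (Real.sum_le_exp_of_nonneg (by positivity) (L+1)) (by positivity)
    _ = Real.exp p * (Nat.factorial L : ℝ) * ((k + L).choose L : ℝ) := by
        rw [← hA]; ring

/-- For `p, L ∈ ℕ` and `0 ≤ x < 1`, the series `∑_{k≥0} (p+k)^L x^k`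
converges, and `∑_{k=0}^∞ (p+k)^L x^k ≤ e^p · L! / (1−x)^{L+1}`. -/
theorem tsum_pow_mul_geometric_le (p L : ℕ) (x : ℝ) (hx0 : 0 ≤ x) (hx1 : x < 1) :
    Summable (fun k : ℕ => ((p : ℝ) + (k : ℝ)) ^ L * x ^ k) ∧
    ∑' k : ℕ, ((p : ℝ) + (k : ℝ)) ^ L * x ^ k
      ≤ Real.exp p * (Nat.factorial L : ℝ) / (1 - x) ^ (L + 1) := by
  have hnorm : ‖x‖ < 1 := by rwa [Real.norm_eq_abs, abs_of_nonneg hx0]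
  have hg : HasSum (fun k : ℕ => ((k + L).choose L : ℝ) * x ^ k) (1 / (1 - x) ^ (L + 1)) :=
    hasSum_choose_mul_geometric_of_norm_lt_one L hnorm
  have hG : HasSum (fun k : ℕ =>
      Real.exp p * (Nat.factorial L : ℝ) * (((k + L).choose L : ℝ) * x ^ k))
      (Real.exp p * (Nat.factorial L : ℝ) * (1 / (1 - x) ^ (L + 1))) :=
    hg.mul_left _
  have hle : ∀ k : ℕ, ((p : ℝ) + (k : ℝ)) ^ L * x ^ k
      ≤ Real.exp p * (Nat.factorial L : ℝ) * (((k + L).choose L : ℝ) * x ^ k) := by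
    intro k
    have := mul_le_mul_of_nonneg_right (keyB p L k) (pow_nonneg hx0 k)
    calc ((p : ℝ) + (k : ℝ)) ^ L * x ^ k
        ≤ Real.exp p * (Nat.factorial L : ℝ) * ((k + L).choose L : ℝ) * x ^ k := this
      _ = Real.exp p * (Nat.factorial L : ℝ) * (((k + L).choose L : ℝ) * x ^ k) := by ring
  have hnn : ∀ k : ℕ, 0 ≤ ((p : ℝ) + (k : ℝ)) ^ L * x ^ k := fun k => by positivity
  have hsum : Summable (fun k : ℕ => ((p : ℝ) + (k : ℝ)) ^ L * x ^ k) :=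
    Summable.of_nonneg_of_le hnn hle hG.summable
  refine ⟨hsum, ?_⟩
  calc ∑' k : ℕ, ((p : ℝ) + (k : ℝ)) ^ L * x ^ k
      ≤ ∑' k : ℕ, Real.exp p * (Nat.factorial L : ℝ) * (((k + L).choose L : ℝ) * x ^ k) :=
        Summable.tsum_le_tsum hle hsum hG.summable
    _ = Real.exp p * (Nat.factorial L : ℝ) * (1 / (1 - x) ^ (L + 1)) := hG.tsum_eq
    _ = Real.exp p * (Nat.factorial L : ℝ) / (1 - x) ^ (L + 1) := by ring
end
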